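/- Let R be a positive integer and let Λ_1,...,Λ_M be sublattices of Z^N of rank N−1 each such that every integer point x with max_i |x_i| ≤ R lies in some Λ_j. Then Σ_{i=1}^M 1/H(Λ_i) ≥ R − √M. -/

import Mathlib

/-- The height `H(Λ)` of a sublattice of `ℤ^N`: the maximum of the absolute
values of the Grassmann coordinates (maximal minors of a basis matrix). -/
noncomputable def latticeHeight {N : ℕ} (Λ : Submodule ℤ (Fin N → ℤ)) : ℕ :=
  letI := Classical.decEq (Module.Free.ChooseBasisIndex ℤ Λ)
  let b := Module.Free.chooseBasis ℤ Λ
  Finset.univ.sup fun f : Module.Free.ChooseBasisIndex ℤ Λ → Fin N =>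
    (Matrix.det (Matrix.of fun i j => ((b j : Fin N → ℤ) (f i)))).natAbs

open Matrix Finset

lemma exists_injective_det_ne_zero {K : Type*} [Field K] {ι n : Type*} [Fintype ι] [Fintype n]
    [DecidableEq ι] [DecidableEq n] (A : Matrix ι n K)
    (hA : LinearIndependent K (fun i => A i)) :
    ∃ f : ι → n, Function.Injective f ∧ (Matrix.of fun i j => A j (f i)).det ≠ 0 := by
  classical
  have hrk : Submodule.span K (Set.range (fun j => Aᵀ j)) = ⊤ := by
    apply Submodule.eq_top_of_finrank_eq
    have h1 : Aᵀ.rank = Module.finrank K (Submodule.span K (Set.range (fun j => Aᵀ j))) :=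
      Aᵀ.rank_eq_finrank_span_row
    have h2 : Aᵀ.rank = A.rank := A.rank_transpose
    have h3 : A.rank = Fintype.card ι := hA.rank_matrix
    rw [← h1, h2, h3, Module.finrank_fintype_fun_eq_card]
  obtain ⟨t, hts, htsp, hti⟩ := exists_linearIndependent K (Set.range (fun j => Aᵀ j))
  rw [hrk] at htsp
  have htfin : t.Finite := Set.Finite.subset (Set.finite_range _) hts
  haveI := htfin.fintype
  have hcard : Fintype.card t = Fintype.card ι := by
    have := finrank_span_set_eq_card hti
    rw [htsp] at this
    rw [← Set.toFinset_card, ← this, finrank_top, Module.finrank_fintype_fun_eq_card]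
  let e : ι ≃ t := (Fintype.equivOfCardEq hcard).symm
  have hpick : ∀ v : t, ∃ j : n, Aᵀ j = (v : ι → K) := fun v => hts v.2
  choose g hg using hpick
  refine ⟨fun i => g (e i), ?_, ?_⟩
  · intro i i' h
    have : Aᵀ (g (e i)) = Aᵀ (g (e i')) := by simp only at h; rw [h]
    rw [hg, hg] at this
    exact e.injective (Subtype.ext this)
  · have hM : (Matrix.of fun i j => A j (g (e i))) = Matrix.of (fun i => ((e i : ι → K))) := by
      ext i j
      have := hg (e i)
      simp only [Matrix.of_apply]
      rw [← congrFun this j]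
      rfl
    rw [hM]
    have hind : LinearIndependent K (fun i : ι => (Matrix.of fun i => ((e i : ι → K))) i) := by
      exact hti.comp e e.injective
    have := (Matrix.linearIndependent_rows_iff_isUnit (K := K)).mp hind
    exact ((Matrix.isUnit_iff_isUnit_det _).mp this).ne_zero


lemma exists_injective_det_ne_zero_int {ι : Type*} [Fintype ι] [DecidableEq ι] {N : ℕ}
    (r : ι → (Fin N → ℤ)) (hr : LinearIndependent ℤ r) :
    ∃ f : ι → Fin N, Function.Injective f ∧ (Matrix.of fun i j => r j (f i)).det ≠ 0 := by
  classical
  let φ : (Fin N → ℤ) →ₗ[ℤ] (Fin N → ℚ) := LinearMap.compLeft (Algebra.linearMap ℤ ℚ) (Fin N)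
  have hφ : LinearMap.ker φ = ⊥ := by
    rw [LinearMap.ker_eq_bot]
    intro x y h
    funext k
    have := congrFun h k
    have h' : (Algebra.linearMap ℤ ℚ) (x k) = (Algebra.linearMap ℤ ℚ) (y k) := this
    simpa using h'
  have h1 : LinearIndependent ℤ (φ ∘ r) := hr.map' φ hφ
  have h2 : LinearIndependent ℚ (fun i => (Matrix.of fun i' => φ (r i')) i) := by
    rw [← LinearIndependent.iff_fractionRing (R := ℤ) (K := ℚ)]
    exact h1
  obtain ⟨f, hfi, hdet⟩ := exists_injective_det_ne_zero (Matrix.of fun i => φ (r i)) h2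
  refine ⟨f, hfi, fun h0 => hdet ?_⟩
  have hmm : (Matrix.of fun i j => (Matrix.of fun i' => φ (r i')) j (f i)) =
      (Int.castRingHom ℚ).mapMatrix (Matrix.of fun i j => r j (f i)) := by
    ext i j
    change (Algebra.linearMap ℤ ℚ) (r j (f i)) = (Int.castRingHom ℚ) (r j (f i))
    simp
  rw [hmm, ← RingHom.map_det, h0]
  simp

lemma span_range_update_sub_smul {k : ℕ} (w : Fin k → (Fin k → ℤ)) (p i : Fin k)
    (hpi : i ≠ p) (q : ℤ) :
    Submodule.span ℤ (Set.range (Function.update w p (w p - q • w i))) =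
      Submodule.span ℤ (Set.range w) := by
  apply le_antisymm <;> rw [Submodule.span_le] <;> intro x hx <;> obtain ⟨j, rfl⟩ := hx
  · by_cases hj : j = p
    · rw [hj, Function.update_self]
      exact sub_mem (Submodule.subset_span ⟨p, rfl⟩)
        (Submodule.smul_mem _ _ (Submodule.subset_span ⟨i, rfl⟩))
    · rw [Function.update_of_ne hj]
      exact Submodule.subset_span ⟨j, rfl⟩
  · by_cases hj : j = p
    · have hwp : w j = (Function.update w p (w p - q • w i) p)
          + q • (Function.update w p (w p - q • w i) i) := by
        rw [Function.update_self, Function.update_of_ne hpi, hj]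
        abel
      rw [hwp]
      exact add_mem (Submodule.subset_span ⟨p, rfl⟩)
        (Submodule.smul_mem _ _ (Submodule.subset_span ⟨i, rfl⟩))
    · have : w j = Function.update w p (w p - q • w i) j := (Function.update_of_ne hj _ _).symm
      rw [this]
      exact Submodule.subset_span ⟨j, rfl⟩


lemma eliminate (m : ℕ) (ℓ : (Fin (m+1) → ℤ) →ₗ[ℤ] ℤ) :
    ∀ (s : ℕ) (w : Fin (m+1) → (Fin (m+1) → ℤ)),
    (∑ i ∈ Finset.univ.erase (Fin.last m), (ℓ (w i)).natAbs) ≤ s →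
    ∃ w' : Fin (m+1) → (Fin (m+1) → ℤ),
      Submodule.span ℤ (Set.range w') = Submodule.span ℤ (Set.range w) ∧
      (∀ i, i ≠ Fin.last m → ℓ (w' i) = 0) ∧
      (Matrix.of w').det.natAbs = (Matrix.of w).det.natAbs := by
  intro s
  induction s with
  | zero =>
    intro w hw
    refine ⟨w, rfl, fun i hi => ?_, rfl⟩
    have hmem : i ∈ Finset.univ.erase (Fin.last m) := Finset.mem_erase.mpr ⟨hi, Finset.mem_univ i⟩
    have h0 : (ℓ (w i)).natAbs = 0 := by
      have := Finset.sum_eq_zero_iff.mp (Nat.le_zero.mp hw) i hmem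
      exact this
    exact Int.natAbs_eq_zero.mp h0
  | succ s ih =>
    intro w hw
    by_cases hz : ∀ i, i ≠ Fin.last m → ℓ (w i) = 0
    · exact ⟨w, rfl, hz, rfl⟩
    · push_neg at hz
      obtain ⟨i, hil, hi0⟩ := hz
      have himem : i ∈ Finset.univ.erase (Fin.last m) :=
        Finset.mem_erase.mpr ⟨hil, Finset.mem_univ i⟩
      set A := ℓ (w i) with hA
      set B := ℓ (w (Fin.last m)) with hB
      set q := B / A with hq
      set w1 := Function.update w (Fin.last m) (w (Fin.last m) - q • w i) with hw1
      have hl1p : ℓ (w1 (Fin.last m)) = B % A := by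
        rw [hw1, Function.update_self, map_sub, LinearMap.map_smul, smul_eq_mul, Int.emod_def, hq]
        ring
      have hl1 : ∀ j, j ≠ Fin.last m → ℓ (w1 j) = ℓ (w j) := by
        intro j hj
        rw [hw1, Function.update_of_ne hj]
      set w2 := w1 ∘ (Equiv.swap (Fin.last m) i) with hw2
      have hw2i : w2 i = w1 (Fin.last m) := by
        simp [hw2, Equiv.swap_apply_right]
      have hw2other : ∀ j, j ≠ Fin.last m → j ≠ i → w2 j = w j := by
        intro j h1 h2
        have : Equiv.swap (Fin.last m) i j = j := Equiv.swap_apply_of_ne_of_ne h1 h2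
        rw [hw2]
        simp only [Function.comp_apply, this]
        rw [hw1, Function.update_of_ne h1]
      -- measure decrease
      have hrlt : (B % A).natAbs < A.natAbs := by
        have h1 : 0 ≤ B % A := Int.emod_nonneg B hi0
        have h2 : B % A < |A| := by
          rw [← Int.emod_abs]
          exact Int.emod_lt_of_pos B (abs_pos.mpr hi0)
        rw [Int.abs_eq_natAbs] at h2
        omega
      have hsum2 : (∑ j ∈ Finset.univ.erase (Fin.last m), (ℓ (w2 j)).natAbs) ≤ s := by
        have hsplit1 : (∑ j ∈ Finset.univ.erase (Fin.last m), (ℓ (w j)).natAbs)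
            = (ℓ (w i)).natAbs + ∑ j ∈ (Finset.univ.erase (Fin.last m)).erase i,
                (ℓ (w j)).natAbs := (Finset.add_sum_erase _ _ himem).symm
        have hsplit2 : (∑ j ∈ Finset.univ.erase (Fin.last m), (ℓ (w2 j)).natAbs)
            = (ℓ (w2 i)).natAbs + ∑ j ∈ (Finset.univ.erase (Fin.last m)).erase i,
                (ℓ (w2 j)).natAbs := (Finset.add_sum_erase _ _ himem).symm
        have heq : ∀ j ∈ (Finset.univ.erase (Fin.last m)).erase i,
            (ℓ (w2 j)).natAbs = (ℓ (w j)).natAbs := by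
          intro j hj
          obtain ⟨hji, hjl⟩ := Finset.mem_erase.mp hj
          obtain ⟨hjl', _⟩ := Finset.mem_erase.mp hjl
          rw [hw2other j hjl' hji]
        rw [Finset.sum_congr rfl heq] at hsplit2
        rw [hsplit1] at hw
        rw [hsplit2, hw2i, hl1p]
        omega
      obtain ⟨w', hsp, hz', hdet⟩ := ih w2 hsum2
      refine ⟨w', ?_, hz', ?_⟩
      · rw [hsp, hw2]
        have hr : Set.range (w1 ∘ (Equiv.swap (Fin.last m) i)) = Set.range w1 :=
          (Equiv.swap (Fin.last m) i).surjective.range_comp w1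
        rw [hr, hw1]
        exact span_range_update_sub_smul w (Fin.last m) i hil q
      · rw [hdet]
        have hd2 : (Matrix.of w2).det.natAbs = (Matrix.of w1).det.natAbs := by
          have h : (Matrix.of w2) = (Matrix.of w1).submatrix (⇑(Equiv.swap (Fin.last m) i)) id := rfl
          rw [h, Matrix.det_permute]
          rcases Int.units_eq_one_or (Equiv.Perm.sign (Equiv.swap (Fin.last m) i)) with hs | hs <;>
            rw [hs] <;> simp
        have hd1 : (Matrix.of w1).det = (Matrix.of w).det := by
          have hup : (Matrix.of w1) = (Matrix.of w).updateRow (Fin.last m)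
              ((Matrix.of w) (Fin.last m) + (-q) • (Matrix.of w) i) := by
            rw [hw1]
            ext a b
            by_cases ha : a = Fin.last m
            · subst ha
              simp [Matrix.updateRow_self, Function.update_self, sub_eq_add_neg]
            · simp [Matrix.updateRow_ne ha, Function.update_of_ne ha]
          rw [hup, Matrix.det_updateRow_add_smul_self _ (Ne.symm hil) (-q)]
        rw [hd2, hd1]


noncomputable def boxZ (m R : ℕ) : Finset (Fin m → ℤ) :=
  Finset.Icc (fun _ => -(R:ℤ)) (fun _ => (R:ℤ))

lemma mem_boxZ {m R : ℕ} {v : Fin m → ℤ} :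
    v ∈ boxZ m R ↔ ∀ k, -(R:ℤ) ≤ v k ∧ v k ≤ R := by
  simp only [boxZ, Finset.mem_Icc, Pi.le_def, ← forall_and]

lemma card_boxZ (m R : ℕ) : (boxZ m R).card = (2*R+1)^m := by
  rw [boxZ, Pi.card_Icc]
  have h : ((R:ℤ) + 1 + (R:ℤ)).toNat = 2*R+1 := by omega
  simp [Int.card_Icc, sub_neg_eq_add, h]

lemma card_dvd_filter_Icc (R : ℕ) (γ : ℤ) (hγ : 0 < γ) (r : ℤ) :
    ((Finset.Icc (-(R:ℤ)) R).filter (fun t => γ ∣ t - r)).card ≤ 2*(R:ℝ)/(γ:ℝ) + 1 := by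
  classical
  set lo : ℤ := -((r + R) / γ) with hlo
  set hi : ℤ := ((R:ℤ) - r) / γ with hhi
  have hsub : ∀ t ∈ (Finset.Icc (-(R:ℤ)) R).filter (fun t => γ ∣ t - r),
      (t - r)/γ ∈ Finset.Icc lo hi := by
    intro t ht
    obtain ⟨hticc, htdvd⟩ := Finset.mem_filter.mp ht
    obtain ⟨ht1, ht2⟩ := Finset.mem_Icc.mp hticc
    have hk : (t - r)/γ * γ = t - r := Int.ediv_mul_cancel htdvd
    refine Finset.mem_Icc.mpr ⟨?_, ?_⟩
    · rw [hlo, neg_le]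
      rw [Int.le_ediv_iff_mul_le hγ]
      nlinarith [hk]
    · rw [hhi, Int.le_ediv_iff_mul_le hγ]
      nlinarith [hk]
  have hinj : Set.InjOn (fun t => (t - r)/γ)
      ((Finset.Icc (-(R:ℤ)) R).filter (fun t => γ ∣ t - r)) := by
    intro a ha b hb hab
    have hka : (a - r)/γ * γ = a - r := Int.ediv_mul_cancel (Finset.mem_filter.mp ha).2
    have hkb : (b - r)/γ * γ = b - r := Int.ediv_mul_cancel (Finset.mem_filter.mp hb).2
    simp only at hab
    nlinarith [hka, hkb, hab]
  have hcard := Finset.card_le_card_of_injOn _ hsub hinj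
  have hIcc : (Finset.Icc lo hi).card = (hi + 1 - lo).toNat := Int.card_Icc lo hi
  have hhiR : (hi:ℝ) * γ ≤ (R:ℝ) - r := by
    have h1 : hi * γ ≤ (R:ℤ) - r := by
      have := Int.mul_ediv_add_emod ((R:ℤ) - r) γ
      have := Int.emod_nonneg ((R:ℤ) - r) (ne_of_gt hγ)
      nlinarith
    exact_mod_cast h1
  have hloR : (-(lo:ℝ)) * γ ≤ (r:ℝ) + R := by
    have h1 : (-lo) * γ ≤ r + (R:ℤ) := by
      have := Int.mul_ediv_add_emod (r + (R:ℤ)) γ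
      have := Int.emod_nonneg (r + (R:ℤ)) (ne_of_gt hγ)
      rw [hlo, neg_neg]
      nlinarith
    exact_mod_cast h1
  have hγR : (0:ℝ) < γ := by exact_mod_cast hγ
  rcases le_or_gt (hi + 1 - lo) 0 with hneg | hpos
  · have : (Finset.Icc lo hi).card = 0 := by rw [hIcc]; omega
    have h0 : ((Finset.Icc (-(R:ℤ)) R).filter (fun t => γ ∣ t - r)).card = 0 := by omega
    rw [h0]
    have : (0:ℝ) ≤ 2*(R:ℝ)/γ := by positivity
    push_cast
    linarith
  · have hto : ((hi + 1 - lo).toNat : ℝ) = (hi:ℝ) + 1 - lo := by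
      have : ((hi + 1 - lo).toNat : ℤ) = hi + 1 - lo := Int.toNat_of_nonneg (by omega)
      exact_mod_cast this
    have : (((Finset.Icc (-(R:ℤ)) R).filter (fun t => γ ∣ t - r)).card : ℝ)
        ≤ (hi:ℝ) + 1 - lo := by
      rw [← hto]
      exact_mod_cast hcard.trans_eq hIcc
    have h2 : (hi:ℝ) ≤ ((R:ℝ) - r)/γ := (le_div_iff₀ hγR).mpr hhiR
    have h3 : -(lo:ℝ) ≤ ((r:ℝ) + R)/γ := (le_div_iff₀ hγR).mpr hloR
    have h4 : (hi:ℝ) + 1 - lo ≤ 2*(R:ℝ)/γ + 1 := by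
      have : ((R:ℝ) - r)/γ + ((r:ℝ) + R)/γ = 2*(R:ℝ)/γ := by
        rw [← add_div]
        ring_nf
      linarith
    linarith

lemma prod_ineq (r a b : ℝ) (hr : 0 ≤ r) (ha : 1 ≤ a) (hb : 1 ≤ b) :
    (r/a + 1) * (r/b + 1) ≤ (r + 1) * (r/(a*b) + 1) := by
  have ha0 : (0:ℝ) < a := by linarith
  have hb0 : (0:ℝ) < b := by linarith
  have hu : r/a = r * a⁻¹ := div_eq_mul_inv r a
  have hv : r/b = r * b⁻¹ := div_eq_mul_inv r b
  have huv : r/(a*b) = r * (a⁻¹ * b⁻¹) := by rw [div_eq_mul_inv, mul_inv]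
  have hu1 : a⁻¹ ≤ 1 := inv_le_one_of_one_le₀ ha
  have hv1 : b⁻¹ ≤ 1 := inv_le_one_of_one_le₀ hb
  have hu0 : (0:ℝ) ≤ a⁻¹ := by positivity
  have hv0 : (0:ℝ) ≤ b⁻¹ := by positivity
  rw [hu, hv, huv]
  nlinarith [mul_nonneg hr (mul_nonneg (sub_nonneg.mpr hu1) (sub_nonneg.mpr hv1))]


open scoped Classical in
lemma latticeCount : ∀ (m : ℕ) (R : ℕ) (w : Fin m → (Fin m → ℤ)),
    (Matrix.of w).det ≠ 0 → ∀ x : Fin m → ℤ,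
    ((((boxZ m R).filter (fun v => v - x ∈ Submodule.span ℤ (Set.range w))).card : ℝ)) ≤
      (2*(R:ℝ)+1)^(m-1) * (2*(R:ℝ)/(((Matrix.of w).det.natAbs : ℝ)) + 1) := by
  intro m
  induction m with
  | zero =>
    intro R w hdet x
    have h1 : ((boxZ 0 R).filter (fun v => v - x ∈ Submodule.span ℤ (Set.range w))).card
        ≤ (boxZ 0 R).card := Finset.card_filter_le _ _
    have h2 : (boxZ 0 R).card = 1 := by rw [card_boxZ]; norm_num
    have h3 : (0:ℝ) ≤ 2*(R:ℝ)/(((Matrix.of w).det.natAbs : ℝ)) := by positivity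
    have h4 : ((boxZ 0 R).filter (fun v => v - x ∈ Submodule.span ℤ (Set.range w))).card ≤ 1 :=
      h1.trans_eq h2
    calc ((((boxZ 0 R).filter (fun v => v - x ∈ Submodule.span ℤ (Set.range w))).card : ℝ))
        ≤ 1 := by exact_mod_cast h4
      _ ≤ (2*(R:ℝ)+1)^(0-1) * (2*(R:ℝ)/(((Matrix.of w).det.natAbs : ℝ)) + 1) := by
          simp only [Nat.zero_sub, pow_zero, one_mul]
          linarith
  | succ m ih =>
    intro R w hdet x
    set p := Fin.last m with hp
    set ℓ : (Fin (m+1) → ℤ) →ₗ[ℤ] ℤ := LinearMap.proj p with hℓ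
    obtain ⟨c, hcspan, hc0, hcdet⟩ := eliminate m ℓ _ w le_rfl
    set g : ℤ := c p p with hg
    have hℓc : ∀ k, ℓ (c k) = c k p := fun k => rfl
    -- det decomposition
    set A' : Matrix (Fin m) (Fin m) ℤ := Matrix.of (fun i j => c (Fin.castSucc i) (Fin.castSucc j))
      with hA'
    have hsplit : (Matrix.of c).det = A'.det * g := by
      have he : (Matrix.of c).submatrix (finSumFinEquiv (m := m) (n := 1))
            (finSumFinEquiv (m := m) (n := 1)) =
          Matrix.fromBlocks A' 0
            (Matrix.of fun (_ : Fin 1) j => c p (Fin.castSucc j))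
            (Matrix.of fun (_ : Fin 1) (_ : Fin 1) => g) := by
        ext i j
        have hlast : ∀ j' : Fin 1, finSumFinEquiv (m := m) (n := 1) (Sum.inr j') = p := by
          intro j'
          apply Fin.ext
          simp [finSumFinEquiv, hp, Fin.last, Subsingleton.elim j' 0]
        have hcast : ∀ i' : Fin m, finSumFinEquiv (m := m) (n := 1) (Sum.inl i')
            = Fin.castSucc i' := by
          intro i'
          apply Fin.ext
          simp [finSumFinEquiv]
        rcases i with i | i <;> rcases j with j | j
        · simp [Matrix.fromBlocks, hcast, hA']
        · simp only [Matrix.submatrix_apply, hcast, hlast, Matrix.fromBlocks,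
            Matrix.of_apply, Sum.elim_inl, Sum.elim_inr]
          have : c (Fin.castSucc i) p = 0 := by
            rw [← hℓc]
            exact hc0 _ (Fin.ne_last_of_lt (Fin.castSucc_lt_last i))
          simp [this]
        · simp [Matrix.fromBlocks, hcast, hlast]
        · simp [Matrix.fromBlocks, hcast, hlast, hg]
      have hd := Matrix.det_submatrix_equiv_self (finSumFinEquiv (m := m) (n := 1)) (Matrix.of c)
      rw [he] at hd
      rw [← hd, Matrix.det_fromBlocks_zero₁₂]
      simp [Matrix.det_fin_one]
    have hDpos : (Matrix.of w).det.natAbs ≠ 0 := fun h => hdet (Int.natAbs_eq_zero.mp h)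
    have hgne : g ≠ 0 := by
      intro h0
      apply hDpos
      rw [← hcdet, hsplit, h0, mul_zero, Int.natAbs_zero]
    have hA'ne : A'.det ≠ 0 := by
      intro h0
      apply hDpos
      rw [← hcdet, hsplit, h0, zero_mul, Int.natAbs_zero]
    have hDabs : (Matrix.of w).det.natAbs = A'.det.natAbs * g.natAbs := by
      rw [← hcdet, hsplit, Int.natAbs_mul]
    -- counting
    set Γ := Submodule.span ℤ (Set.range w) with hΓ
    set T := (boxZ (m+1) R).filter (fun v => v - x ∈ Γ) with hT
    set C := (Finset.Icc (-(R:ℤ)) (R:ℤ)).filter (fun t => ((g.natAbs : ℤ)) ∣ t - x p) with hC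
    have hspan' : Γ = Submodule.span ℤ (Set.range c) := hcspan.symm
    have hrep : ∀ v : Fin (m+1) → ℤ, v ∈ Γ → ∃ α : Fin (m+1) → ℤ, ∑ k, α k • c k = v := by
      intro v hv
      rw [hspan'] at hv
      exact (Submodule.mem_span_range_iff_exists_fun ℤ).mp hv
    have hsumlast : ∀ (α : Fin (m+1) → ℤ), (∑ k, α k • c k) p = α p * g := by
      intro α
      have h0 : ∀ k ∈ Finset.univ, k ≠ p → (α k • c k) p = 0 := by
        intro k _ hk
        have hck : c k p = 0 := by rw [← hℓc]; exact hc0 k hk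
        simp [hck]
      have key := Finset.sum_eq_single (f := fun k => (α k • c k) p) p h0
        (fun h => absurd (Finset.mem_univ p) h)
      calc (∑ k, α k • c k) p = ∑ k, (α k • c k) p := by rw [Finset.sum_apply]
        _ = (α p • c p) p := key
        _ = α p * g := by simp [hg, smul_eq_mul]
    have hlastC : ∀ v ∈ T, v p ∈ C := by
      intro v hv
      obtain ⟨hvbox, hvΓ⟩ := Finset.mem_filter.mp hv
      have hmem := mem_boxZ.mp hvbox p
      obtain ⟨α, hα⟩ := hrep _ hvΓ
      refine Finset.mem_filter.mpr ⟨Finset.mem_Icc.mpr ⟨hmem.1, hmem.2⟩, ?_⟩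
      have happ : v p - x p = α p * g := by
        rw [← hsumlast α, hα]
        simp
      rw [happ, Int.natAbs_dvd]
      exact dvd_mul_left g (α p)
    -- fibers
    have hfibsub : ∀ t : ℤ, ∀ v₀ ∈ T.filter (fun v => v p = t), ∀ v ∈ T.filter (fun v => v p = t),
        (fun i : Fin m => v (Fin.castSucc i)) - (fun i : Fin m => v₀ (Fin.castSucc i)) ∈
          Submodule.span ℤ (Set.range (fun i : Fin m =>
            (fun j : Fin m => c (Fin.castSucc i) (Fin.castSucc j)))) := by
      intro t v₀ hv₀ v hv
      obtain ⟨hvT, hvp⟩ := Finset.mem_filter.mp hv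
      obtain ⟨hv₀T, hv₀p⟩ := Finset.mem_filter.mp hv₀
      have hvΓ := (Finset.mem_filter.mp hvT).2
      have hv₀Γ := (Finset.mem_filter.mp hv₀T).2
      have hsub : v - v₀ ∈ Γ := by
        have h := Submodule.sub_mem Γ hvΓ hv₀Γ
        rwa [sub_sub_sub_cancel_right] at h
      obtain ⟨α, hα⟩ := hrep _ hsub
      have hαp : α p = 0 := by
        have h1 : (v - v₀) p = 0 := by simp [hvp, hv₀p]
        have h2 := hsumlast α
        rw [hα] at h2
        rw [h1] at h2
        rcases mul_eq_zero.mp h2.symm with h | h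
        · exact h
        · exact absurd h hgne
      have hφ : ∀ i : Fin m, v (Fin.castSucc i) - v₀ (Fin.castSucc i)
          = ∑ k : Fin m, α (Fin.castSucc k) * c (Fin.castSucc k) (Fin.castSucc i) := by
        intro i
        have h1 : (∑ k, α k • c k) (Fin.castSucc i) = v (Fin.castSucc i) - v₀ (Fin.castSucc i) := by
          rw [hα]; simp
        rw [← h1, Finset.sum_apply]
        rw [Fin.sum_univ_castSucc (f := fun k => (α k • c k) (Fin.castSucc i))]
        have : (α p • c p) (Fin.castSucc i) = 0 := by simp [hαp]
        rw [this, add_zero]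
        simp [smul_eq_mul]
      have : ((fun i : Fin m => v (Fin.castSucc i)) - fun i : Fin m => v₀ (Fin.castSucc i))
          = ∑ k : Fin m, α (Fin.castSucc k) •
              (fun j : Fin m => c (Fin.castSucc k) (Fin.castSucc j)) := by
        funext i
        rw [Pi.sub_apply, hφ i, Finset.sum_apply]
        simp [smul_eq_mul]
      rw [this]
      exact Submodule.sum_mem _ fun k _ => Submodule.smul_mem _ _ (Submodule.subset_span ⟨k, rfl⟩)
    have hfib : ∀ t ∈ C, ((T.filter (fun v => v p = t)).card : ℝ) ≤
        (2*(R:ℝ)+1)^(m-1) * (2*(R:ℝ)/((A'.det.natAbs : ℝ)) + 1) := by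
      intro t _
      rcases Finset.eq_empty_or_nonempty (T.filter (fun v => v p = t)) with hF | hF
      · rw [hF]
        simp only [Finset.card_empty, Nat.cast_zero]
        positivity
      · obtain ⟨v₀, hv₀⟩ := hF
        set w' : Fin m → (Fin m → ℤ) :=
          fun i => (fun j : Fin m => c (Fin.castSucc i) (Fin.castSucc j)) with hw'
        have hw'A : Matrix.of w' = A' := rfl
        have hmap : ∀ v ∈ T.filter (fun v => v p = t),
            (fun i : Fin m => v (Fin.castSucc i)) ∈
              (boxZ m R).filter (fun y =>
                y - (fun i : Fin m => v₀ (Fin.castSucc i)) ∈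
                  Submodule.span ℤ (Set.range w')) := by
          intro v hv
          have hvbox := (Finset.mem_filter.mp (Finset.mem_filter.mp hv).1).1
          refine Finset.mem_filter.mpr ⟨?_, ?_⟩
          · rw [mem_boxZ]
            intro k
            exact mem_boxZ.mp hvbox (Fin.castSucc k)
          · have := hfibsub t v₀ hv₀ v hv
            exact this
        have hinj : Set.InjOn (fun (v : Fin (m+1) → ℤ) => (fun i : Fin m => v (Fin.castSucc i)))
            ↑(T.filter (fun v => v p = t)) := by
          intro a ha b hb hab
          have hap := (Finset.mem_filter.mp (Finset.mem_coe.mp ha)).2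
          have hbp := (Finset.mem_filter.mp (Finset.mem_coe.mp hb)).2
          funext k
          induction k using Fin.lastCases with
          | last =>
            show a p = b p
            rw [hap, hbp]
          | cast i => exact congrFun hab i
        have hcard := Finset.card_le_card_of_injOn _ hmap hinj
        have hihx := ih R w' (by rw [hw'A]; exact hA'ne) (fun i : Fin m => v₀ (Fin.castSucc i))
        rw [hw'A] at hihx
        calc ((T.filter (fun v => v p = t)).card : ℝ)
            ≤ (((boxZ m R).filter (fun y =>
                y - (fun i : Fin m => v₀ (Fin.castSucc i)) ∈
                  Submodule.span ℤ (Set.range w'))).card : ℝ) := by exact_mod_cast hcard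
          _ ≤ (2*(R:ℝ)+1)^(m-1) * (2*(R:ℝ)/((A'.det.natAbs : ℝ)) + 1) := hihx
    -- combine
    have hsubT : T ⊆ C.biUnion (fun t => T.filter (fun v => v p = t)) := fun v hv =>
      Finset.mem_biUnion.mpr ⟨v p, hlastC v hv, Finset.mem_filter.mpr ⟨hv, rfl⟩⟩
    have hγpos : (0:ℤ) < ((g.natAbs : ℕ) : ℤ) := by
      exact_mod_cast Int.natAbs_pos.mpr hgne
    have hcC : (C.card : ℝ) ≤ 2*(R:ℝ)/((g.natAbs:ℝ)) + 1 := by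
      have hc := card_dvd_filter_Icc R ((g.natAbs : ℕ) : ℤ) hγpos (x p)
      rw [hC]
      simpa [Nat.cast_natAbs] using hc
    have hTsum : (T.card : ℝ) ≤ (C.card : ℝ) *
        ((2*(R:ℝ)+1)^(m-1) * (2*(R:ℝ)/((A'.det.natAbs : ℝ)) + 1)) := by
      have h1 : T.card ≤ ∑ t ∈ C, (T.filter (fun v => v p = t)).card :=
        (Finset.card_le_card hsubT).trans Finset.card_biUnion_le
      have h2 : (T.card : ℝ) ≤ ∑ t ∈ C, ((T.filter (fun v => v p = t)).card : ℝ) := by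
        exact_mod_cast h1
      refine h2.trans ?_
      calc ∑ t ∈ C, ((T.filter (fun v => v p = t)).card:ℝ)
          ≤ ∑ _t ∈ C, ((2*(R:ℝ)+1)^(m-1) * (2*(R:ℝ)/((A'.det.natAbs : ℝ)) + 1)) :=
            Finset.sum_le_sum hfib
        _ = C.card * ((2*(R:ℝ)+1)^(m-1) * (2*(R:ℝ)/((A'.det.natAbs : ℝ)) + 1)) := by
            rw [Finset.sum_const, nsmul_eq_mul]
    rcases Nat.eq_zero_or_pos m with hm0 | hmpos
    · subst hm0
      have hinj0 : Set.InjOn (fun (v : Fin 1 → ℤ) => v p) ↑T := by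
        intro a ha b hb hab
        funext k
        have hk : k = p := Subsingleton.elim k p
        rw [hk]
        exact hab
      have h1 : T.card ≤ C.card :=
        Finset.card_le_card_of_injOn _ (fun v hv => hlastC v hv) hinj0
      have hgD : (Matrix.of w).det.natAbs = g.natAbs := by
        have hA1 : A'.det = 1 := Matrix.det_isEmpty
        rw [hDabs, hA1]
        simp
      calc (T.card : ℝ) ≤ (C.card : ℝ) := by exact_mod_cast h1
        _ ≤ 2*(R:ℝ)/((g.natAbs:ℝ)) + 1 := hcC
        _ = (2*(R:ℝ)+1)^((0+1)-1) * (2*(R:ℝ)/(((Matrix.of w).det.natAbs:ℝ)) + 1) := by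
            rw [hgD]
            simp
    · have hA1 : (1:ℝ) ≤ (A'.det.natAbs : ℝ) := by
        have h := Nat.one_le_iff_ne_zero.mpr
          (fun h => hA'ne (Int.natAbs_eq_zero.mp h))
        exact_mod_cast h
      have hg1 : (1:ℝ) ≤ (g.natAbs : ℝ) := by
        have h := Nat.one_le_iff_ne_zero.mpr
          (fun h => hgne (Int.natAbs_eq_zero.mp h))
        exact_mod_cast h
      have hRnn : (0:ℝ) ≤ 2*(R:ℝ) := by positivity
      have hPi := prod_ineq (2*(R:ℝ)) ((g.natAbs:ℝ)) ((A'.det.natAbs:ℝ)) hRnn hg1 hA1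
      have hpow : (0:ℝ) ≤ (2*(R:ℝ)+1)^(m-1) := by positivity
      have hfinal : (T.card:ℝ) ≤ (2*(R:ℝ)+1)^(m-1) *
          ((2*(R:ℝ)+1) * (2*(R:ℝ)/((g.natAbs:ℝ)*(A'.det.natAbs:ℝ)) + 1)) := by
        calc (T.card:ℝ)
            ≤ (C.card:ℝ) * ((2*(R:ℝ)+1)^(m-1) * (2*(R:ℝ)/((A'.det.natAbs:ℝ)) + 1)) := hTsum
          _ ≤ (2*(R:ℝ)/((g.natAbs:ℝ)) + 1) *
              ((2*(R:ℝ)+1)^(m-1) * (2*(R:ℝ)/((A'.det.natAbs:ℝ)) + 1)) := by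
              apply mul_le_mul_of_nonneg_right hcC
              positivity
          _ = (2*(R:ℝ)+1)^(m-1) *
              ((2*(R:ℝ)/((g.natAbs:ℝ)) + 1) * (2*(R:ℝ)/((A'.det.natAbs:ℝ)) + 1)) := by ring
          _ ≤ (2*(R:ℝ)+1)^(m-1) *
              ((2*(R:ℝ)+1) * (2*(R:ℝ)/((g.natAbs:ℝ)*(A'.det.natAbs:ℝ)) + 1)) := by
              exact mul_le_mul_of_nonneg_left hPi hpow
      have hcastD : ((Matrix.of w).det.natAbs : ℝ) = (g.natAbs:ℝ)*(A'.det.natAbs:ℝ) := by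
        rw [hDabs]
        push_cast
        ring
      have hpowm : (2*(R:ℝ)+1)^(m-1) * (2*(R:ℝ)+1) = (2*(R:ℝ)+1)^m := by
        rw [← pow_succ]
        congr 1
        omega
      calc (T.card:ℝ) ≤ _ := hfinal
        _ = (2*(R:ℝ)+1)^m * (2*(R:ℝ)/((g.natAbs:ℝ)*(A'.det.natAbs:ℝ)) + 1) := by
            rw [← hpowm]; ring
        _ = (2*(R:ℝ)+1)^((m+1)-1) * (2*(R:ℝ)/(((Matrix.of w).det.natAbs:ℝ)) + 1) := by
            rw [hcastD]
            norm_num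


lemma latticeHeight_eq {N : ℕ} (Λ : Submodule ℤ (Fin N → ℤ)) :
    latticeHeight Λ =
      @Finset.sup ℕ ((Module.Free.ChooseBasisIndex ℤ Λ) → Fin N) _ _
        (@Finset.univ _ (@Pi.instFintype _ _ (Classical.decEq _) _ _))
        (fun f => (Matrix.det (Matrix.of fun i j =>
          ((Module.Free.chooseBasis ℤ Λ j : Fin N → ℤ) (f i)))).natAbs) := rfl

open scoped Classical in
lemma per_lattice (N R : ℕ) (hN : 2 ≤ N) (Λ : Submodule ℤ (Fin N → ℤ))
    (hrk : Module.finrank ℤ Λ = N - 1) :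
    1 ≤ latticeHeight Λ ∧
    (((boxZ N R).filter (fun v => v ∈ Λ)).card : ℝ) ≤
      (2*(R:ℝ)+1)^(N-2) * (2*(R:ℝ)/((latticeHeight Λ : ℝ)) + 1) := by
  classical
  set b := Module.Free.chooseBasis ℤ Λ with hb
  set r : Module.Free.ChooseBasisIndex ℤ Λ → (Fin N → ℤ) :=
    fun j => ((b j : Fin N → ℤ)) with hrdef
  have hcard : Fintype.card (Module.Free.ChooseBasisIndex ℤ Λ) = N - 1 := by
    rw [← Module.finrank_eq_card_chooseBasisIndex]
    exact hrk
  have hrind : LinearIndependent ℤ r :=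
    b.linearIndependent.map' Λ.subtype (Submodule.ker_subtype Λ)
  obtain ⟨f₁, hf₁inj, hf₁det⟩ := exists_injective_det_ne_zero_int r hrind
  obtain ⟨f₀, hf₀ne, hf₀H⟩ : ∃ f₀ : Module.Free.ChooseBasisIndex ℤ Λ → Fin N,
      (Matrix.of fun i j => r j (f₀ i)).det ≠ 0 ∧
      (Matrix.of fun i j => r j (f₀ i)).det.natAbs = latticeHeight Λ := by
    rw [latticeHeight_eq]
    obtain ⟨f₀, _, heq⟩ := Finset.exists_mem_eq_sup
      (Finset.univ : Finset (Module.Free.ChooseBasisIndex ℤ Λ → Fin N))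
      ⟨f₁, Finset.mem_univ f₁⟩
      (fun f => (Matrix.det (Matrix.of fun i j => r j (f i))).natAbs)
    refine ⟨f₀, ?_, ?_⟩
    · intro hzero
      have hle := Finset.le_sup
        (f := fun f => (Matrix.det (Matrix.of fun i j => r j (f i))).natAbs)
        (Finset.mem_univ f₁)
      rw [heq, hzero, Int.natAbs_zero] at hle
      exact hf₁det (Int.natAbs_eq_zero.mp (Nat.le_zero.mp hle))
    · exact heq.symm
  have hH1 : 1 ≤ latticeHeight Λ := by
    rw [← hf₀H]
    exact Nat.one_le_iff_ne_zero.mpr (fun h => hf₀ne (Int.natAbs_eq_zero.mp h))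
  set σ : Module.Free.ChooseBasisIndex ℤ Λ ≃ Fin (N-1) :=
    Fintype.equivFinOfCardEq hcard with hσ
  set w : Fin (N-1) → (Fin (N-1) → ℤ) :=
    fun k => fun i => r (σ.symm k) (f₀ (σ.symm i)) with hwdef
  have hwdet : (Matrix.of w).det = (Matrix.of fun i j => r j (f₀ i)).det := by
    have h1 : Matrix.of w = ((Matrix.of fun i j => r j (f₀ i)).submatrix σ.symm σ.symm)ᵀ := rfl
    rw [h1, Matrix.det_transpose, Matrix.det_submatrix_equiv_self]
  have hΛspan : Λ = Submodule.span ℤ (Set.range r) := by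
    conv_lhs => rw [← Submodule.map_subtype_top Λ]
    rw [← b.span_eq, Submodule.map_span]
    congr 1
    rw [← Set.range_comp]
    rfl
  set π : (Fin N → ℤ) →ₗ[ℤ] (Fin (N-1) → ℤ) :=
    LinearMap.funLeft ℤ ℤ (fun k => f₀ (σ.symm k)) with hπ
  have hπspan : ∀ v, v ∈ Λ → π v ∈ Submodule.span ℤ (Set.range w) := by
    intro v hv
    rw [hΛspan] at hv
    have h1 : π v ∈ Submodule.map π (Submodule.span ℤ (Set.range r)) :=
      Submodule.mem_map_of_mem hv
    rw [Submodule.map_span, ← Set.range_comp] at h1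
    have h2 : Set.range w = Set.range (π ∘ r) := (σ.symm.surjective).range_comp (π ∘ r)
    rw [← h2] at h1
    exact h1
  have hker : ∀ v, v ∈ Λ → π v = 0 → v = 0 := by
    intro v hv h0
    set coeff : Module.Free.ChooseBasisIndex ℤ Λ → ℤ := fun k => b.repr ⟨v, hv⟩ k with hco
    have hvrep : ∀ j, v j = ∑ k, coeff k * r k j := by
      intro j
      have h1 := b.sum_repr ⟨v, hv⟩
      have h2 : (∑ k, coeff k • r k) = v := by
        have h3 := congrArg (Subtype.val) h1
        rw [AddSubmonoidClass.coe_finset_sum] at h3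
        simpa [hco, hrdef] using h3
      rw [← h2, Finset.sum_apply]
      simp [smul_eq_mul]
    set M₀ : Matrix (Module.Free.ChooseBasisIndex ℤ Λ) (Module.Free.ChooseBasisIndex ℤ Λ) ℤ :=
      Matrix.of fun i k => r k (f₀ i) with hM₀
    have hM0v : M₀.mulVec coeff = 0 := by
      funext i
      have h3 : v (f₀ i) = 0 := by
        have h4 := congrFun h0 (σ i)
        simpa [hπ, LinearMap.funLeft, Equiv.symm_apply_apply] using h4
      have h5 : (M₀.mulVec coeff) i = ∑ k, coeff k * r k (f₀ i) := by
        simp [hM₀, Matrix.mulVec, dotProduct, mul_comm]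
      rw [Pi.zero_apply, h5, ← hvrep (f₀ i), h3]
    have hC0 : ∀ k, coeff k = 0 := by
      intro k
      have h4 : M₀.adjugate.mulVec (M₀.mulVec coeff) = 0 := by
        rw [hM0v, Matrix.mulVec_zero]
      rw [Matrix.mulVec_mulVec, Matrix.adjugate_mul, Matrix.smul_mulVec,
        Matrix.one_mulVec] at h4
      have h5 := congrFun h4 k
      have h6 : M₀.det * coeff k = 0 := by
        simpa [smul_eq_mul] using h5
      rcases mul_eq_zero.mp h6 with h | h
      · exact absurd h hf₀ne
      · exact h
    funext j
    rw [hvrep j]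
    simp [hC0]
  have hmap : ∀ v ∈ (boxZ N R).filter (fun v => v ∈ Λ),
      π v ∈ (boxZ (N-1) R).filter
        (fun y => y - 0 ∈ Submodule.span ℤ (Set.range w)) := by
    intro v hv
    obtain ⟨hvb, hvΛ⟩ := Finset.mem_filter.mp hv
    refine Finset.mem_filter.mpr ⟨?_, ?_⟩
    · rw [mem_boxZ]
      intro k
      exact mem_boxZ.mp hvb (f₀ (σ.symm k))
    · rw [sub_zero]
      exact hπspan v hvΛ
  have hinj : Set.InjOn π ↑((boxZ N R).filter (fun v => v ∈ Λ)) := by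
    intro a ha b' hb' hab
    have haΛ := (Finset.mem_filter.mp (Finset.mem_coe.mp ha)).2
    have hbΛ := (Finset.mem_filter.mp (Finset.mem_coe.mp hb')).2
    have hsub : a - b' ∈ Λ := Submodule.sub_mem Λ haΛ hbΛ
    have h0 : π (a - b') = 0 := by rw [map_sub, hab, sub_self]
    exact sub_eq_zero.mp (hker _ hsub h0)
  have hcards := Finset.card_le_card_of_injOn π hmap hinj
  have hLC := latticeCount (N-1) R w (by rw [hwdet]; exact hf₀ne) 0
  refine ⟨hH1, ?_⟩
  have hHcast : ((Matrix.of w).det.natAbs : ℝ) = (latticeHeight Λ : ℝ) := by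
    rw [hwdet, hf₀H]
  have hexp : (N-1)-1 = N-2 := by omega
  calc (((boxZ N R).filter (fun v => v ∈ Λ)).card : ℝ)
      ≤ (((boxZ (N-1) R).filter
          (fun y => y - 0 ∈ Submodule.span ℤ (Set.range w))).card : ℝ) := by
        exact_mod_cast hcards
    _ ≤ (2*(R:ℝ)+1)^((N-1)-1) * (2*(R:ℝ)/(((Matrix.of w).det.natAbs : ℝ)) + 1) := hLC
    _ = (2*(R:ℝ)+1)^(N-2) * (2*(R:ℝ)/((latticeHeight Λ : ℝ)) + 1) := by
        rw [hHcast, hexp]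

theorem stmt_18 (N M R : ℕ) (hN : 2 ≤ N) (hR : 0 < R)
    (Λ : Fin M → Submodule ℤ (Fin N → ℤ))
    (hrk : ∀ i, Module.finrank ℤ (Λ i) = N - 1)
    (hcover : ∀ x : Fin N → ℤ, (∀ k, |x k| ≤ (R : ℤ)) → ∃ i, x ∈ Λ i) :
    (R : ℝ) - Real.sqrt M ≤ ∑ i, 1 / (latticeHeight (Λ i) : ℝ) := by
  classical
  have hkey := fun i => per_lattice N R hN (Λ i) (hrk i)
  have hcov : boxZ N R ⊆ Finset.univ.biUnion (fun i => (boxZ N R).filter (fun v => v ∈ Λ i)) := by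
    intro v hv
    obtain ⟨i, hi⟩ := hcover v (fun k => abs_le.mpr ⟨(mem_boxZ.mp hv k).1, (mem_boxZ.mp hv k).2⟩)
    exact Finset.mem_biUnion.mpr ⟨i, Finset.mem_univ i, Finset.mem_filter.mpr ⟨hv, hi⟩⟩
  have hcard : ((2*R+1)^N : ℕ) ≤ ∑ i, ((boxZ N R).filter (fun v => v ∈ Λ i)).card := by
    rw [← card_boxZ]
    exact (Finset.card_le_card hcov).trans Finset.card_biUnion_le
  have hreal : ((2*(R:ℝ)+1))^N ≤
      ∑ i, (2*(R:ℝ)+1)^(N-2) * (2*(R:ℝ)/((latticeHeight (Λ i) : ℝ)) + 1) := by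
    calc ((2*(R:ℝ)+1))^N = (((2*R+1)^N : ℕ) : ℝ) := by push_cast; ring
      _ ≤ (∑ i, (((boxZ N R).filter (fun v => v ∈ Λ i)).card : ℝ)) := by exact_mod_cast hcard
      _ ≤ _ := Finset.sum_le_sum (fun i _ => (hkey i).2)
  set S := ∑ i, 1 / ((latticeHeight (Λ i)) : ℝ) with hSdef
  have hS : ∑ i, (2*(R:ℝ)+1)^(N-2) * (2*(R:ℝ)/((latticeHeight (Λ i)):ℝ) + 1)
      = (2*(R:ℝ)+1)^(N-2) * (2*(R:ℝ) * S + M) := by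
    rw [← Finset.mul_sum]
    congr 1
    have hterm : ∀ i : Fin M, 2*(R:ℝ)/((latticeHeight (Λ i)):ℝ) + 1
        = 2*(R:ℝ) * (1/((latticeHeight (Λ i)):ℝ)) + 1 := by
      intro i
      rw [mul_one_div]
    rw [Finset.sum_congr rfl (fun i _ => hterm i), Finset.sum_add_distrib, Finset.sum_const,
      Finset.card_univ, Fintype.card_fin, nsmul_eq_mul, mul_one, ← Finset.mul_sum]
  have hpow2 : ((2*(R:ℝ)+1))^N = (2*(R:ℝ)+1)^(N-2) * (2*(R:ℝ)+1)^2 := by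
    rw [← pow_add]
    congr 1
    omega
  have hppos : (0:ℝ) < (2*(R:ℝ)+1)^(N-2) := by positivity
  have hmain : (2*(R:ℝ)+1)^2 ≤ 2*(R:ℝ)*S + M := by
    rw [hpow2, hS] at hreal
    exact le_of_mul_le_mul_left (by linarith [hreal]) hppos
  have hSnn : 0 ≤ S := Finset.sum_nonneg (fun i _ => by positivity)
  rcases le_or_gt (R:ℝ) (Real.sqrt M) with h | h
  · linarith
  · have hMR : (M:ℝ) < (R:ℝ)^2 := by
      nlinarith [Real.sq_sqrt (by positivity : (0:ℝ) ≤ (M:ℝ)), Real.sqrt_nonneg (M:ℝ)]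
    have hR1 : (1:ℝ) ≤ R := by exact_mod_cast hR
    have hexp2 : (2*(R:ℝ)+1)^2 = 4*(R:ℝ)^2+4*(R:ℝ)+1 := by ring
    rw [hexp2] at hmain
    have h1 : 2*(R:ℝ)*(R:ℝ) ≤ 2*(R:ℝ)*S := by nlinarith [sq_nonneg (R:ℝ)]
    have h2 : (R:ℝ) ≤ S := le_of_mul_le_mul_left h1 (by linarith)
    have h3 := Real.sqrt_nonneg (M:ℝ)
    linarith
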